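/- Let f : ℕ → ℂ be a bounded function with AE(f) = 0 and finite range. Then for every c in the range of f, the characteristic function χ_{f⁻¹({c})} of the level set f⁻¹({c}) = {n ∈ ℕ : f(n) = c} satisfies AE(χ_{f⁻¹({c})}) = 0. In particular, every bounded function with zero anqie entropy and finite range is a finite linear combination of {0,1}-valued functions with zero anqie entropy. -/

import Mathlib

open Filter Set Topology

namespace Anqie

variable {X : Type*} [TopologicalSpace X]

/-- `𝒰` is an open cover of `X`. -/
def IsOpenCover (𝒰 : Set (Set X)) : Prop :=
  (∀ U ∈ 𝒰, IsOpen U) ∧ ⋃₀ 𝒰 = Set.univ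

/-- The common refinement `𝒰 ∨ T⁻¹ 𝒰 ∨ ⋯ ∨ T^{-(n-1)} 𝒰`. -/
def iterJoin (T : X → X) (𝒰 : Set (Set X)) (n : ℕ) : Set (Set X) :=
  {V | ∃ u : Fin n → Set X, (∀ j, u j ∈ 𝒰) ∧ V = ⋂ j : Fin n, T^[(j : ℕ)] ⁻¹' u j}

/-- The minimal cardinality of a finite subcover of `𝒱` (junk value `0` if none exists). -/
noncomputable def coverNum (𝒱 : Set (Set X)) : ℕ :=
  sInf {k | ∃ F : Finset (Set X), (↑F : Set (Set X)) ⊆ 𝒱 ∧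
    ⋃₀ (↑F : Set (Set X)) = Set.univ ∧ F.card = k}

/-- The Adler–Konheim–McAndrew entropy of `T` relative to the open cover `𝒰`. -/
noncomputable def coverEntropy (T : X → X) (𝒰 : Set (Set X)) : EReal :=
  Filter.atTop.limsup fun n : ℕ =>
    ((Real.log (coverNum (iterJoin T 𝒰 n)) / n : ℝ) : EReal)

/-- The Adler–Konheim–McAndrew topological entropy of `T`, via open covers. -/
noncomputable def entropy (T : X → X) : EReal :=
  ⨆ 𝒰 ∈ {𝒰 : Set (Set X) | IsOpenCover 𝒰}, coverEntropy T 𝒰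

/-- The set of forward-orbit sequences of `f : ℕ → X` inside `X^ℕ`. -/
def orbitSet (f : ℕ → X) : Set (ℕ → X) :=
  {ω | ∃ n : ℕ, ∀ k : ℕ, ω k = f (n + k)}

/-- `X_f`, the closure of the set of orbit sequences in the product topology. -/
def orbitClosure (f : ℕ → X) : Set (ℕ → X) := closure (orbitSet f)

lemma shift_mem_orbitClosure (f : ℕ → X) {ω : ℕ → X} (hω : ω ∈ orbitClosure f) :
    (fun k => ω (k + 1)) ∈ orbitClosure f := by
  have hcont : Continuous fun ω : ℕ → X => fun k => ω (k + 1) :=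
    continuous_pi fun k => continuous_apply (k + 1)
  have hmaps : MapsTo (fun ω : ℕ → X => fun k => ω (k + 1)) (orbitSet f) (orbitSet f) := by
    rintro ω ⟨n, hn⟩
    refine ⟨n + 1, fun k => ?_⟩
    show ω (k + 1) = f (n + 1 + k)
    rw [hn (k + 1)]; congr 1; omega
  exact map_mem_closure hcont hω hmaps

/-- `B_f`, the left shift restricted to `X_f`. -/
def shiftOn (f : ℕ → X) : orbitClosure f → orbitClosure f :=
  fun ω => ⟨fun k => (ω : ℕ → X) (k + 1), shift_mem_orbitClosure f ω.2⟩

/-- The anqie entropy of a map `f : ℕ → X`: the AKM topological entropy of the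
left shift on `X_f`. -/
noncomputable def AE (f : ℕ → X) : EReal := entropy (shiftOn f)

end Anqie

namespace Anqie

variable {X Y : Type*} [TopologicalSpace X] [TopologicalSpace Y]

lemma log_nat_nonneg (a : ℕ) : 0 ≤ Real.log a := by
  rcases Nat.eq_zero_or_pos a with h | h
  · simp [h]
  · exact Real.log_nonneg (by exact_mod_cast h)

lemma log_nat_mono {a b : ℕ} (h : a ≤ b) : Real.log a ≤ Real.log b := by
  rcases Nat.eq_zero_or_pos a with h0 | h0
  · simpa [h0] using log_nat_nonneg b
  · exact Real.log_le_log (by exact_mod_cast h0) (by exact_mod_cast h)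

lemma exists_finite_subcover [CompactSpace X] {𝒱 : Set (Set X)} (h : IsOpenCover 𝒱) :
    ∃ F : Finset (Set X), (↑F : Set (Set X)) ⊆ 𝒱 ∧ ⋃₀ (↑F : Set (Set X)) = univ := by
  obtain ⟨ho, hc⟩ := h
  have hcov : univ ⊆ ⋃ V : 𝒱, (V : Set X) := by
    rw [← sUnion_eq_iUnion, hc]
  obtain ⟨t, ht⟩ := isCompact_univ.elim_finite_subcover (fun V : 𝒱 => (V : Set X))
    (fun V => ho V V.2) hcov
  classical
  refine ⟨t.image Subtype.val, ?_, ?_⟩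
  · intro V hV
    simp only [Finset.coe_image, mem_image] at hV
    obtain ⟨W, _, rfl⟩ := hV
    exact W.2
  · apply eq_univ_of_univ_subset
    intro x hx
    obtain ⟨V, hVt, hxV⟩ := mem_iUnion₂.mp (ht hx)
    refine ⟨V, ?_, hxV⟩
    simp only [Finset.coe_image, mem_image, Finset.mem_coe]
    exact ⟨V, hVt, rfl⟩

lemma isOpenCover_iterJoin {T : X → X} (hT : Continuous T) {𝒰 : Set (Set X)}
    (h : IsOpenCover 𝒰) (n : ℕ) : IsOpenCover (iterJoin T 𝒰 n) := by
  obtain ⟨ho, hc⟩ := h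
  constructor
  · rintro V ⟨u, hu, rfl⟩
    exact isOpen_iInter_of_finite fun j =>
      (ho (u j) (hu j)).preimage (hT.iterate (j : ℕ))
  · apply eq_univ_of_univ_subset
    intro x _
    have : ∀ j : Fin n, ∃ U ∈ 𝒰, T^[(j : ℕ)] x ∈ U := by
      intro j
      have : T^[(j : ℕ)] x ∈ ⋃₀ 𝒰 := by rw [hc]; trivial
      simpa [mem_sUnion] using this
    choose u hu hxu using this
    exact ⟨⋂ j : Fin n, T^[(j : ℕ)] ⁻¹' u j, ⟨u, hu, rfl⟩, mem_iInter.mpr fun j => hxu j⟩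

lemma coverNum_iterJoin_le [CompactSpace X] {π : X → Y} (hs : Function.Surjective π)
    {T : X → X} (hT : Continuous T) {S : Y → Y} (hsc : Function.Semiconj π T S)
    {𝒰 : Set (Set Y)} (h𝒰 : IsOpenCover 𝒰) (hop : ∀ U ∈ 𝒰, IsOpen (π ⁻¹' U)) (n : ℕ) :
    coverNum (iterJoin S 𝒰 n) ≤ coverNum (iterJoin T ((π ⁻¹' ·) '' 𝒰) n) := by
  -- the pulled-back cover
  have h𝒰' : IsOpenCover ((π ⁻¹' ·) '' 𝒰) := by
    constructor
    · rintro U ⟨W, hW, rfl⟩; exact hop W hW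
    · apply eq_univ_of_univ_subset
      intro x _
      have : π x ∈ ⋃₀ 𝒰 := by rw [h𝒰.2]; trivial
      obtain ⟨W, hW, hxW⟩ := this
      exact ⟨π ⁻¹' W, ⟨W, hW, rfl⟩, hxW⟩
  -- every element of the pulled-back join is the preimage of an element of the join downstairs
  have key : ∀ V ∈ iterJoin T ((π ⁻¹' ·) '' 𝒰) n, ∃ W ∈ iterJoin S 𝒰 n, π ⁻¹' W = V := by
    rintro V ⟨u, hu, rfl⟩
    choose w hw hwu using hu
    refine ⟨⋂ j : Fin n, S^[(j : ℕ)] ⁻¹' w j, ⟨w, hw, rfl⟩, ?_⟩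
    rw [preimage_iInter]
    refine iInter_congr fun j => ?_
    ext x
    simp only [mem_preimage, ← hwu j]
    rw [(hsc.iterate_right (j : ℕ)).eq x]
  -- the pulled-back join has a finite subcover, so coverNum is attained
  obtain ⟨F₀, hF₀sub, hF₀cov⟩ := exists_finite_subcover (isOpenCover_iterJoin hT h𝒰' n)
  have hne : {k | ∃ F : Finset (Set X), (↑F : Set (Set X)) ⊆ iterJoin T ((π ⁻¹' ·) '' 𝒰) n ∧
      ⋃₀ (↑F : Set (Set X)) = univ ∧ F.card = k}.Nonempty :=
    ⟨F₀.card, F₀, hF₀sub, hF₀cov, rfl⟩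
  obtain ⟨F, hFsub, hFcov, hFcard⟩ := Nat.sInf_mem hne
  -- build the downstairs cover
  classical
  have hex : ∀ V ∈ F, ∃ W ∈ iterJoin S 𝒰 n, π ⁻¹' W = V := fun V hV => key V (hFsub hV)
  set ρ : Set X → Set Y := fun V =>
    if h : ∃ W ∈ iterJoin S 𝒰 n, π ⁻¹' W = V then h.choose else ∅ with hρ
  have hρ1 : ∀ V ∈ F, ρ V ∈ iterJoin S 𝒰 n := by
    intro V hV
    have h := hex V hV
    simp only [hρ, dif_pos h]
    exact h.choose_spec.1
  have hρ2 : ∀ V ∈ F, π ⁻¹' (ρ V) = V := by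
    intro V hV
    have h := hex V hV
    simp only [hρ, dif_pos h]
    exact h.choose_spec.2
  refine le_trans (Nat.sInf_le ⟨F.image ρ, ?_, ?_, rfl⟩) ?_
  · intro W hW
    simp only [Finset.coe_image, mem_image] at hW
    obtain ⟨V, hV, rfl⟩ := hW
    exact hρ1 V hV
  · apply eq_univ_of_univ_subset
    intro y _
    obtain ⟨x, rfl⟩ := hs y
    have : x ∈ ⋃₀ (↑F : Set (Set X)) := by rw [hFcov]; trivial
    obtain ⟨V, hV, hxV⟩ := this
    refine ⟨ρ V, ?_, ?_⟩
    · simp only [Finset.coe_image, mem_image, Finset.mem_coe]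
      exact ⟨V, Finset.mem_coe.mp hV, rfl⟩
    have := hρ2 V hV
    rw [← this] at hxV
    exact hxV
  · exact le_trans Finset.card_image_le (le_of_eq hFcard)

lemma entropy_le_of_semiconj [CompactSpace X] {π : X → Y} (hc : Continuous π)
    (hs : Function.Surjective π) {T : X → X} (hT : Continuous T) {S : Y → Y}
    (hsc : Function.Semiconj π T S) : entropy S ≤ entropy T := by
  rw [entropy]
  refine iSup₂_le fun 𝒰 h𝒰 => ?_
  have h1 : coverEntropy S 𝒰 ≤ coverEntropy T ((π ⁻¹' ·) '' 𝒰) := by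
    refine Filter.limsup_le_limsup (Eventually.of_forall fun n => ?_)
    have hcn := coverNum_iterJoin_le hs hT hsc h𝒰
      (fun U hU => (h𝒰.1 U hU).preimage hc) n
    apply EReal.coe_le_coe_iff.mpr
    rcases Nat.eq_zero_or_pos n with hn | hn
    · simp [hn]
    · apply div_le_div_of_nonneg_right (log_nat_mono hcn)
      positivity
  refine h1.trans ?_
  have h𝒰' : IsOpenCover ((π ⁻¹' ·) '' 𝒰) := by
    constructor
    · rintro U ⟨W, hW, rfl⟩; exact (h𝒰.1 W hW).preimage hc
    · apply eq_univ_of_univ_subset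
      intro x _
      have : π x ∈ ⋃₀ 𝒰 := by rw [h𝒰.2]; trivial
      obtain ⟨W, hW, hxW⟩ := this
      exact ⟨π ⁻¹' W, ⟨W, hW, rfl⟩, hxW⟩
  exact le_iSup₂ (f := fun 𝒱 (_ : 𝒱 ∈ {𝒰 : Set (Set X) | IsOpenCover 𝒰}) =>
    coverEntropy T 𝒱) ((π ⁻¹' ·) '' 𝒰) h𝒰'

lemma entropy_nonneg [Nonempty Y] (S : Y → Y) : 0 ≤ entropy S := by
  have h1 : IsOpenCover ({univ} : Set (Set Y)) := by
    constructor
    · rintro U rfl; exact isOpen_univ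
    · simp
  have h2 : ∀ n, iterJoin S ({univ} : Set (Set Y)) n = {univ} := by
    intro n
    ext V
    constructor
    · rintro ⟨u, hu, rfl⟩
      have : ∀ j : Fin n, u j = univ := fun j => hu j
      simp [this]
    · rintro rfl
      refine ⟨fun _ => univ, fun _ => rfl, ?_⟩
      simp
  have h3 : coverNum ({univ} : Set (Set Y)) = 1 := by
    apply le_antisymm
    · exact Nat.sInf_le ⟨{univ}, by simp, by simp, by simp⟩
    · rw [Nat.one_le_iff_ne_zero]
      intro h0
      have hne : {k | ∃ F : Finset (Set Y), (↑F : Set (Set Y)) ⊆ {univ} ∧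
          ⋃₀ (↑F : Set (Set Y)) = univ ∧ F.card = k}.Nonempty :=
        ⟨1, {univ}, by simp, by simp, by simp⟩
      obtain ⟨F, _, hFcov, hFcard⟩ := Nat.sInf_mem hne
      rw [coverNum] at h0
      rw [h0, Finset.card_eq_zero] at hFcard
      subst hFcard
      simp only [Finset.coe_empty, sUnion_empty] at hFcov
      exact (univ_nonempty.ne_empty hFcov.symm).elim
  have h4 : coverEntropy S ({univ} : Set (Set Y)) = 0 := by
    rw [coverEntropy]
    have : (fun n : ℕ => ((Real.log (coverNum (iterJoin S ({univ} : Set (Set Y)) n)) / n : ℝ) :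
        EReal)) = fun _ => (0 : EReal) := by
      funext n
      rw [h2 n, h3]
      simp
    rw [this, limsup_const]
  calc (0 : EReal) = coverEntropy S ({univ} : Set (Set Y)) := h4.symm
    _ ≤ entropy S := le_iSup₂ (f := fun 𝒱 (_ : 𝒱 ∈ {𝒰 : Set (Set Y) | IsOpenCover 𝒰}) =>
        coverEntropy S 𝒱) ({univ} : Set (Set Y)) h1

end Anqie

/-- Let `f : ℕ → ℂ` have zero anqie entropy and finite range.
Then for every `c` in the range of `f`, the characteristic function of the level
set `f⁻¹({c})` has zero anqie entropy; in particular `f` is a finite linear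
combination of `{0,1}`-valued functions with zero anqie entropy. -/
theorem level_sets_of_zero_entropy_finite_range (f : ℕ → ℂ)
    (h0 : Anqie.AE f = 0) (hfin : (Set.range f).Finite) :
    (∀ c ∈ Set.range f, Anqie.AE ((f ⁻¹' {c}).indicator fun _ => (1 : ℂ)) = 0) ∧
    ∃ (k : ℕ) (c : Fin k → ℂ) (g : Fin k → ℕ → ℂ),
      (∀ i, Anqie.AE (g i) = 0) ∧ (∀ i n, g i n = 0 ∨ g i n = 1) ∧
      ∀ n, f n = ∑ i, c i * g i n := by
  classical
  -- The orbit closure of `f` lies in the product of copies of the (finite) range of `f`.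
  have hsub : ∀ ω ∈ Anqie.orbitClosure f, ∀ k, ω k ∈ Set.range f := by
    have hcl : IsClosed {ω : ℕ → ℂ | ∀ k, ω k ∈ Set.range f} := by
      have he : {ω : ℕ → ℂ | ∀ k, ω k ∈ Set.range f} =
          ⋂ k, (fun ω : ℕ → ℂ => ω k) ⁻¹' (Set.range f) := by
        ext ω; simp
      rw [he]
      exact isClosed_iInter fun k => hfin.isClosed.preimage (continuous_apply k)
    have hsub0 : Anqie.orbitSet f ⊆ {ω : ℕ → ℂ | ∀ k, ω k ∈ Set.range f} := by
      rintro ω ⟨n, hn⟩ k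
      rw [hn k]; exact ⟨n + k, rfl⟩
    exact fun ω hω => closure_minimal hsub0 hcl hω
  -- `X_f` is compact.
  have hKf : IsCompact (Anqie.orbitClosure f) := by
    have hK : IsCompact {ω : ℕ → ℂ | ∀ k, ω k ∈ Set.range f} := by
      have he : {ω : ℕ → ℂ | ∀ k, ω k ∈ Set.range f} =
          Set.pi Set.univ (fun _ : ℕ => Set.range f) := by
        ext ω; simp [Set.mem_pi]
      rw [he]
      exact isCompact_univ_pi fun _ => hfin.isCompact
    exact hK.of_isClosed_subset isClosed_closure (fun ω hω => hsub ω hω)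
  haveI : CompactSpace (Anqie.orbitClosure f) := isCompact_iff_compactSpace.mp hKf
  have main : ∀ c ∈ Set.range f, Anqie.AE ((f ⁻¹' {c}).indicator fun _ => (1 : ℂ)) = 0 := by
    intro c hc
    set φ : ℂ → ℂ := ({c} : Set ℂ).indicator (fun _ => (1 : ℂ)) with hφ
    set g : ℕ → ℂ := (f ⁻¹' {c}).indicator (fun _ => (1 : ℂ)) with hg
    have hgf : ∀ n, g n = φ (f n) := by
      intro n
      simp [hg, hφ, Set.indicator_apply, Set.mem_preimage, Pi.single_apply]
    set π : (ℕ → ℂ) → (ℕ → ℂ) := fun ω k => φ (ω k) with hπdef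
    -- π maps orbit sequences of f to orbit sequences of g
    have hπorb : Set.MapsTo π (Anqie.orbitSet f) (Anqie.orbitSet g) := by
      rintro ω ⟨n, hn⟩
      refine ⟨n, fun k => ?_⟩
      show φ (ω k) = g (n + k)
      rw [hn k, hgf]
    -- continuity of π restricted to X_f
    have hrescont : Continuous fun ω : Anqie.orbitClosure f => π ω.1 := by
      apply continuous_pi
      intro k
      show Continuous fun ω : Anqie.orbitClosure f => φ (ω.1 k)
      apply IsLocallyConstant.continuous
      rw [IsLocallyConstant.iff_exists_open]
      intro ω
      by_cases hω : ω.1 k = c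
      · refine ⟨(fun σ : Anqie.orbitClosure f => σ.1 k) ⁻¹' (Set.range f \ {c})ᶜ, ?_, ?_, ?_⟩
        · exact (((hfin.subset (Set.diff_subset)).isClosed).isOpen_compl).preimage
            ((continuous_apply k).comp continuous_subtype_val)
        · simp [hω]
        · intro σ hσ
          have h1 : σ.1 k ∈ Set.range f := hsub σ.1 σ.2 k
          have h2 : σ.1 k ∉ Set.range f \ {c} := hσ
          have h3 : σ.1 k = c := by
            by_contra h
            exact h2 ⟨h1, h⟩
          simp [hφ, h3, hω]
      · refine ⟨(fun σ : Anqie.orbitClosure f => σ.1 k) ⁻¹' ({c}ᶜ), ?_, hω, ?_⟩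
        · exact (isClosed_singleton.isOpen_compl).preimage
            ((continuous_apply k).comp continuous_subtype_val)
        · intro σ hσ
          have hσ' : σ.1 k ≠ c := hσ
          simp [hφ, hσ', hω]
    have hπcontOn : ContinuousOn π (Anqie.orbitClosure f) :=
      continuousOn_iff_continuous_restrict.mpr hrescont
    -- π maps X_f into X_g
    have hmaps : Set.MapsTo π (Anqie.orbitClosure f) (Anqie.orbitClosure g) := by
      intro ω hω
      have h1 : π '' (Anqie.orbitClosure f) ⊆ closure (π '' Anqie.orbitSet f) :=
        hπcontOn.image_closure
      have h2 : closure (π '' Anqie.orbitSet f) ⊆ Anqie.orbitClosure g :=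
        closure_mono (Set.MapsTo.image_subset hπorb)
      exact h2 (h1 ⟨ω, hω, rfl⟩)
    set prj : Anqie.orbitClosure f → Anqie.orbitClosure g :=
      fun ω => ⟨π ω.1, hmaps ω.2⟩ with hprjdef
    have hprjc : Continuous prj := hrescont.subtype_mk _
    -- surjectivity
    have hprjsurj : Function.Surjective prj := by
      intro σ
      have hKim : IsCompact (π '' Anqie.orbitClosure f) := hKf.image_of_continuousOn hπcontOn
      have hclim : IsClosed (π '' Anqie.orbitClosure f) := hKim.isClosed
      have horb : Anqie.orbitSet g ⊆ π '' Anqie.orbitClosure f := by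
        rintro ω ⟨n, hn⟩
        refine ⟨fun k => f (n + k), subset_closure ⟨n, fun k => rfl⟩, ?_⟩
        funext k
        show φ (f (n + k)) = ω k
        rw [hn k, hgf]
      have : σ.1 ∈ π '' Anqie.orbitClosure f :=
        closure_minimal horb hclim σ.2
      obtain ⟨x, hx, hxeq⟩ := this
      exact ⟨⟨x, hx⟩, Subtype.ext hxeq⟩
    -- semiconjugacy
    have hsc : Function.Semiconj prj (Anqie.shiftOn f) (Anqie.shiftOn g) := by
      intro ω
      apply Subtype.ext
      funext k
      rfl
    -- continuity of the shift
    have hTc : Continuous (Anqie.shiftOn f) := by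
      apply Continuous.subtype_mk
      exact continuous_pi fun k => (continuous_apply (k + 1)).comp continuous_subtype_val
    -- nonemptiness of X_g
    haveI : Nonempty (Anqie.orbitClosure g) :=
      ⟨⟨g, subset_closure ⟨0, fun k => by simp⟩⟩⟩
    have hle : Anqie.AE g ≤ Anqie.AE f :=
      Anqie.entropy_le_of_semiconj hprjc hprjsurj hTc hsc
    have hge : (0 : EReal) ≤ Anqie.AE g := Anqie.entropy_nonneg _
    rw [hg] at *
    exact le_antisymm (h0 ▸ hle) hge
  refine ⟨main, ?_⟩
  -- enumeration of the range
  set F := hfin.toFinset with hF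
  set k := F.card with hk
  set e : Fin k ≃ {x // x ∈ F} := F.equivFin.symm with he
  set c : Fin k → ℂ := fun i => (e i : ℂ) with hc
  set g : Fin k → ℕ → ℂ := fun i => (f ⁻¹' {c i}).indicator (fun _ => (1 : ℂ)) with hgdef
  have hcmem : ∀ i, c i ∈ Set.range f := by
    intro i
    exact hfin.mem_toFinset.mp (e i).2
  have hcinj : Function.Injective c := by
    intro i j hij
    have : e i = e j := Subtype.ext hij
    exact e.injective this
  refine ⟨k, c, g, fun i => main (c i) (hcmem i), ?_, ?_⟩
  · intro i n
    by_cases h : f n = c i <;> simp [hgdef, Set.indicator_apply, Set.mem_preimage, h]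
  · intro n
    have hfn : f n ∈ F := by rw [hF, Set.Finite.mem_toFinset]; exact ⟨n, rfl⟩
    set i₀ : Fin k := e.symm ⟨f n, hfn⟩ with hi₀
    have hci₀ : c i₀ = f n := by
      simp [hc, hi₀]
    rw [Finset.sum_eq_single i₀]
    · have : g i₀ n = 1 := by
        simp [hgdef, Set.indicator_apply, Set.mem_preimage, hci₀]
      rw [this, mul_one, hci₀]
    · intro j _ hj
      have hne : f n ≠ c j := by
        intro h
        apply hj
        have : e j = ⟨f n, hfn⟩ := Subtype.ext h.symm
        rw [hi₀, ← this, Equiv.symm_apply_apply]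
      have : g j n = 0 := by
        simp [hgdef, Set.indicator_apply, Set.mem_preimage, hne]
      rw [this, mul_zero]
    · intro h
      exact absurd (Finset.mem_univ i₀) h
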